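/- If (1−p)·(sin x)/x + p·(tan x)/x > 1 holds for all x in (0, π/2), then p ≥ 1/3. -/

import Mathlib

set_option maxHeartbeats 1000000

open Real

theorem weighted_huygens_circular_necessity (p : ℝ)
    (h : ∀ x : ℝ, 0 < x → x < Real.pi / 2 →
      (1 - p) * (Real.sin x / x) + p * (Real.tan x / x) > 1) :
    p ≥ 1/3 := by
  by_contra hp
  push_neg at hp
  rcases lt_or_ge p 0 with hp0 | hp0
  · -- p < 0 : use x = 1
    have h2 : (1:ℝ) < π / 2 := by
      have := Real.pi_gt_three
      linarith
    have hh := h 1 one_pos h2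
    have hs : Real.sin 1 < 1 := Real.sin_lt one_pos
    have ht : 1 < Real.tan 1 := Real.lt_tan one_pos h2
    have : (1 - p) * (Real.sin 1 / 1) + p * (Real.tan 1 / 1) < 1 := by
      simp only [div_one]
      nlinarith
    linarith
  · -- 0 ≤ p < 1/3 : use x = 1/3 - p
    obtain ⟨x, hxdef⟩ : ∃ x : ℝ, x = 1/3 - p := ⟨_, rfl⟩
    have hx0 : 0 < x := by rw [hxdef]; linarith
    have hx1 : x ≤ 1/3 := by rw [hxdef]; linarith
    have hpx : p = 1/3 - x := by rw [hxdef]; ring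
    have hxpi : x < π / 2 := by
      have := Real.pi_gt_three
      linarith
    have hh := h x hx0 hxpi
    have habs : |x| ≤ 1 := by rw [abs_of_pos hx0]; linarith
    have hspos : 0 < Real.sin x := Real.sin_pos_of_pos_of_lt_pi hx0
      (by have := Real.pi_gt_three; linarith)
    have hs : Real.sin x ≤ x - x^3/6 + x^4 * (5/96) := by
      have hb := Real.sin_bound habs
      rw [abs_of_pos hx0] at hb
      have := (abs_sub_le_iff.1 hb).1
      nlinarith [pow_pos hx0 4, mul_le_mul_of_nonneg_left hx1 (pow_pos hx0 4).le]
    have hc : 1 - x^2/2 < Real.cos x := Real.one_sub_sq_div_two_lt_cos (ne_of_gt hx0)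
    have hcpos : 0 < Real.cos x := by nlinarith
    have hc1 : Real.cos x ≤ 1 := Real.cos_le_one x
    rw [Real.tan_eq_sin_div_cos] at hh
    obtain ⟨U, hUdef⟩ : ∃ U : ℝ, U = x - x^3/6 + x^4 * (5/96) := ⟨_, rfl⟩
    rw [← hUdef] at hs
    have hxU : 0 < x - U := by
      rw [hUdef]
      nlinarith [mul_pos (mul_pos (mul_pos hx0 hx0) hx0)
        (show (0:ℝ) < 16 - 5*x by linarith)]
    have hU0 : 0 ≤ U := by linarith
    have h1p : (0:ℝ) ≤ 1 - p := by linarith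
    -- clear denominators in hh
    have key : x * Real.cos x < (1 - p) * Real.sin x * Real.cos x + p * Real.sin x := by
      have h2 : ((1 - p) * Real.sin x * Real.cos x + p * Real.sin x) / (x * Real.cos x)
          = (1 - p) * (Real.sin x / x) + p * (Real.sin x / Real.cos x / x) := by
        field_simp
      have h3 : 1 < ((1 - p) * Real.sin x * Real.cos x + p * Real.sin x) / (x * Real.cos x) := by
        rw [h2]; exact hh
      exact (one_lt_div (mul_pos hx0 hcpos)).mp h3
    have e1 : x * Real.cos x < (1 - p) * U * Real.cos x + p * U := by
      have t1 : (1 - p) * Real.sin x * Real.cos x ≤ (1 - p) * U * Real.cos x := by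
        nlinarith [mul_nonneg h1p hcpos.le]
      have t2 : p * Real.sin x ≤ p * U := by nlinarith
      linarith
    have e4 : (x - U) * Real.cos x < p * U * (1 - Real.cos x) := by nlinarith [e1]
    have e3 : (x - U) * (1 - x^2/2) < (x - U) * Real.cos x :=
      mul_lt_mul_of_pos_left hc hxU
    have e5 : p * U * (1 - Real.cos x) ≤ p * x * (x^2/2) := by
      have hcc : 1 - Real.cos x ≤ x^2/2 := by linarith
      have hUx : U ≤ x := by linarith
      have hpU : 0 ≤ p * U := mul_nonneg hp0 hU0
      calc p * U * (1 - Real.cos x) ≤ p * U * (x^2/2) :=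
            mul_le_mul_of_nonneg_left hcc hpU
        _ ≤ p * x * (x^2/2) :=
            mul_le_mul_of_nonneg_right (mul_le_mul_of_nonneg_left hUx hp0)
              (by positivity)
    have final : (x - U) * (1 - x^2/2) < p * x * (x^2/2) := by linarith
    rw [hUdef, hpx] at final
    have m1 : x^5 ≤ x^4 * (1/3) := by nlinarith [pow_pos hx0 4]
    have m2 : (0:ℝ) ≤ x^6 := by positivity
    ring_nf at final
    linarith only [pow_pos hx0 4, m1, m2, final]
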